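/- Let n be a positive integer and let δ satisfy 1/n ≤ δ ≤ 1/2. Then there exists a partially ordered set Q on n points with comp(Q) ≥ δ·n(n−1)/2 and e(Q) ≥ n!·(2δ/e)^{2δn}. -/

import Mathlib

/-- The number of linear extensions of a partial order `P` on `n` points:
bijections to `{1, ..., n}` (modeled as `Fin n` with its usual order) that
are strictly monotone with respect to `P`. -/
noncomputable def linExtCount (n : ℕ) (P : PartialOrder (Fin n)) : ℕ :=
  Nat.card {f : Fin n ≃ Fin n // ∀ x y : Fin n, P.lt x y → f x < f y}

/-- The number of comparable pairs of `P`: each unordered comparable pair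
`{x, y}` corresponds to exactly one ordered pair `(x, y)` with `x ≺ y`. -/
noncomputable def compCount (n : ℕ) (P : PartialOrder (Fin n)) : ℕ :=
  Nat.card {p : Fin n × Fin n // P.lt p.1 p.2}


/-- Two-level poset on `Fin n`: elements with value `< m` are below elements with value `≥ m`. -/
def twoLevel (n m : ℕ) : PartialOrder (Fin n) where
  le x y := x = y ∨ ((x : ℕ) < m ∧ m ≤ (y : ℕ))
  lt x y := (x : ℕ) < m ∧ m ≤ (y : ℕ)
  le_refl x := Or.inl rfl
  le_trans a b c h1 h2 := by
    rcases h1 with rfl | ⟨h1a, h1b⟩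
    · exact h2
    · rcases h2 with rfl | ⟨h2a, h2b⟩
      · exact Or.inr ⟨h1a, h1b⟩
      · exact absurd (lt_of_le_of_lt h1b h2a) (lt_irrefl m)
  le_antisymm a b h1 h2 := by
    rcases h1 with rfl | ⟨h1a, h1b⟩
    · rfl
    · rcases h2 with rfl | ⟨h2a, h2b⟩
      · rfl
      · exact absurd (lt_of_le_of_lt h1b h2a) (lt_irrefl m)
  lt_iff_le_not_ge x y := by
    constructor
    · rintro ⟨h1, h2⟩
      refine ⟨Or.inr ⟨h1, h2⟩, ?_⟩
      rintro (rfl | ⟨h3, h4⟩)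
      · exact absurd (lt_of_le_of_lt h2 h1) (lt_irrefl m)
      · exact absurd (lt_of_le_of_lt h4 h1) (lt_irrefl m)
    · rintro ⟨rfl | ⟨h1, h2⟩, h3⟩
      · exact absurd (Or.inl rfl) h3
      · exact ⟨h1, h2⟩

theorem twoLevel_lt_iff (n m : ℕ) (x y : Fin n) :
    (twoLevel n m).lt x y ↔ ((x : ℕ) < m ∧ m ≤ (y : ℕ)) := Iff.rfl

theorem compCount_lower (n m : ℕ) (hm : m ≤ n) :
    m * (n - m) ≤ compCount n (twoLevel n m) := by
  have := Nat.card_le_card_of_injective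
    (α := Fin m × Fin (n - m)) (β := {p : Fin n × Fin n // (twoLevel n m).lt p.1 p.2})
    (fun ij => ⟨(⟨ij.1, by omega⟩, ⟨m + ij.2, by omega⟩),
      ⟨by simpa using ij.1.2, by simp⟩⟩)
    (by
      rintro ⟨i, j⟩ ⟨i', j'⟩ h
      have h1 : (i : ℕ) = i' := congrArg (fun p => ((Subtype.val p).1 : ℕ)) h
      have h2 : m + (j : ℕ) = m + j' := congrArg (fun p => ((Subtype.val p).2 : ℕ)) h
      have : (j : ℕ) = j' := by omega
      exact Prod.ext (Fin.ext h1) (Fin.ext this))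
  simpa [compCount, Nat.card_eq_fintype_card] using this

theorem linExtCount_lower (n m : ℕ) (hm : m ≤ n) :
    m.factorial * (n - m).factorial ≤ linExtCount n (twoLevel n m) := by
  have hmn : m + (n - m) = n := by omega
  let e0 : Fin m ⊕ Fin (n - m) ≃ Fin n := finSumFinEquiv.trans (finCongr hmn)
  have he0l : ∀ i : Fin m, (e0 (Sum.inl i) : ℕ) = (i : ℕ) := by
    intro i; simp [e0]
  have he0r : ∀ j : Fin (n - m), (e0 (Sum.inr j) : ℕ) = m + (j : ℕ) := by
    intro j; simp [e0]
  let F : Equiv.Perm (Fin m) × Equiv.Perm (Fin (n - m)) →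
      {f : Fin n ≃ Fin n // ∀ x y : Fin n, (twoLevel n m).lt x y → f x < f y} :=
    fun st => ⟨e0.symm.trans ((Equiv.sumCongr st.1 st.2).trans e0), by
      rintro x y ⟨hx, hy⟩
      simp only [Equiv.trans_apply]
      rcases hsx : e0.symm x with i | j
      · rcases hsy : e0.symm y with i' | j'
        · exfalso
          have := he0l i'
          rw [← hsy, Equiv.apply_symm_apply] at this
          omega
        · have h1 := he0l (st.1 i)
          have h2 := he0r (st.2 j')
          rw [Fin.lt_def]
          simp only [Equiv.sumCongr_apply, Sum.map_inl, Sum.map_inr]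
          rw [h1, h2]
          have := (st.1 i).2
          omega
      · exfalso
        have := he0r j
        rw [← hsx, Equiv.apply_symm_apply] at this
        omega⟩
  have hinj : Function.Injective F := by
    rintro ⟨σ, τ⟩ ⟨σ', τ'⟩ h
    have h' := congrArg Subtype.val h
    simp only [F] at h'
    have hσ : σ = σ' := by
      ext i
      have := congrFun (congrArg (fun (g : Fin n ≃ Fin n) => ⇑g) h') (e0 (Sum.inl i))
      simp only [Equiv.trans_apply, Equiv.symm_apply_apply, Equiv.sumCongr_apply,
        Sum.map_inl] at this
      have := e0.injective this
      exact congrArg Fin.val (Sum.inl.inj this)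
    have hτ : τ = τ' := by
      ext j
      have := congrFun (congrArg (fun (g : Fin n ≃ Fin n) => ⇑g) h') (e0 (Sum.inr j))
      simp only [Equiv.trans_apply, Equiv.symm_apply_apply, Equiv.sumCongr_apply,
        Sum.map_inr] at this
      have := e0.injective this
      exact congrArg Fin.val (Sum.inr.inj this)
    rw [hσ, hτ]
  have := Nat.card_le_card_of_injective F hinj
  simpa [linExtCount, Nat.card_eq_fintype_card, Fintype.card_perm] using this

theorem pow_self_le_factorial_mul_exp (k : ℕ) :
    (k : ℝ) ^ k ≤ k.factorial * Real.exp 1 ^ k := by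
  have h1 : (k : ℝ) ^ k / k.factorial ≤ Real.exp k := by
    have hsum := Real.sum_le_exp_of_nonneg (x := (k : ℝ)) (by positivity) (k + 1)
    refine le_trans ?_ hsum
    exact Finset.single_le_sum (f := fun i => (k : ℝ) ^ i / i.factorial)
      (fun i _ => by positivity) (Finset.self_mem_range_succ k)
  rw [Real.exp_one_pow]
  have hf : (0 : ℝ) < k.factorial := by positivity
  calc (k : ℝ) ^ k = (k : ℝ) ^ k / k.factorial * k.factorial := by field_simp
    _ ≤ Real.exp k * k.factorial := by
        exact mul_le_mul_of_nonneg_right h1 hf.le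
    _ = k.factorial * Real.exp k := mul_comm _ _

theorem choose_le_rpow_aux (n k : ℕ) (δ : ℝ) (hδ : 0 < δ) (hk1 : 1 ≤ k) (hkn : k ≤ n)
    (hkb : (k : ℝ) ≤ 2 * δ * n) (hbn : 2 * δ * n ≤ n) :
    (n.choose k : ℝ) ≤ (Real.exp 1 / (2 * δ)) ^ (2 * δ * (n : ℝ)) := by
  have hn1 : 1 ≤ n := le_trans hk1 hkn
  have hnR : (0 : ℝ) < n := by exact_mod_cast hn1
  have haR : (0 : ℝ) < k := by exact_mod_cast hk1
  set a : ℝ := (k : ℝ) with ha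
  set b : ℝ := 2 * δ * n with hb
  have hab : a ≤ b := hkb
  have hb0 : 0 < b := lt_of_lt_of_le haR hab
  set c : ℝ := Real.exp 1 * n with hc
  have hc0 : 0 < c := by positivity
  -- Step 1 : choose ≤ (c/a)^k
  have step1 : (n.choose k : ℝ) ≤ (c / a) ^ k := by
    have h1 : (n.choose k : ℝ) ≤ (n : ℝ) ^ k / k.factorial := by
      exact_mod_cast Nat.choose_le_pow_div k n
    refine h1.trans ?_
    rw [div_pow, div_le_div_iff₀ (by positivity) (by positivity)]
    have := pow_self_le_factorial_mul_exp k
    calc (n : ℝ) ^ k * a ^ k ≤ (n : ℝ) ^ k * (k.factorial * Real.exp 1 ^ k) :=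
          mul_le_mul_of_nonneg_left this (by positivity)
      _ = c ^ k * k.factorial := by rw [hc, mul_pow]; ring
  -- Step 2 : (c/a)^k ≤ (c/b)^b  (rpow)
  have hca : (0 : ℝ) < c / a := by positivity
  have hcb : (0 : ℝ) < c / b := by positivity
  have hlog1 : 1 ≤ Real.log (c / b) := by
    rw [Real.le_log_iff_exp_le hcb]
    rw [hc]
    rw [le_div_iff₀ hb0]
    nlinarith [Real.exp_pos 1]
  have hlogsplit : Real.log (c / a) = Real.log (c / b) + Real.log (b / a) := by
    rw [← Real.log_mul (ne_of_gt hcb) (by positivity)]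
    congr 1
    field_simp
  have hlogba : a * Real.log (b / a) ≤ b - a := by
    have := Real.log_le_sub_one_of_pos (show (0:ℝ) < b / a by positivity)
    have h2 : a * Real.log (b / a) ≤ a * (b / a - 1) :=
      mul_le_mul_of_nonneg_left this haR.le
    have h3 : a * (b / a - 1) = b - a := by field_simp
    linarith
  have hkey : Real.log (c / a) * a ≤ Real.log (c / b) * b := by
    have : Real.log (c / a) * a = a * Real.log (c / b) + a * Real.log (b / a) := by
      rw [hlogsplit]; ring
    nlinarith
  have step2 : ((c / a) ^ k : ℝ) ≤ (c / b) ^ b := by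
    have e1 : ((c / a) ^ k : ℝ) = (c / a) ^ (a : ℝ) := by
      rw [ha, ← Real.rpow_natCast]
    rw [e1, Real.rpow_def_of_pos hca, Real.rpow_def_of_pos hcb]
    exact Real.exp_le_exp.mpr hkey
  -- Step 3 : c/b = e/(2δ)
  have step3 : c / b = Real.exp 1 / (2 * δ) := by
    rw [hc, hb]
    field_simp
  calc (n.choose k : ℝ) ≤ (c / a) ^ k := step1
    _ ≤ (c / b) ^ b := step2
    _ = (Real.exp 1 / (2 * δ)) ^ (2 * δ * (n : ℝ)) := by rw [step3, hb]

theorem exists_dense_with_many_extensions_small_delta (n : ℕ) (hn : 1 ≤ n) (δ : ℝ)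
    (hδ0 : 1 / (n : ℝ) ≤ δ) (hδ1 : δ ≤ 1 / 2) :
    ∃ P : PartialOrder (Fin n),
      δ * ((n : ℝ) * ((n : ℝ) - 1) / 2) ≤ (compCount n P : ℝ) ∧
      (Nat.factorial n : ℝ) * (2 * δ / Real.exp 1) ^ (2 * δ * (n : ℝ)) ≤
        (linExtCount n P : ℝ) := by
  have hnR : (0 : ℝ) < n := by exact_mod_cast hn
  have hδpos : 0 < δ := lt_of_lt_of_le (by positivity) hδ0
  have hδn1 : 1 ≤ δ * n := by
    rw [div_le_iff₀ hnR] at hδ0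
    linarith [hδ0]
  set k : ℕ := ⌈δ * n⌉₊ with hkdef
  have hk1 : 1 ≤ k := Nat.one_le_iff_ne_zero.mpr (by
    have : (0:ℕ) < k := Nat.ceil_pos.mpr (by positivity)
    omega)
  have hkR : δ * n ≤ (k : ℝ) := Nat.le_ceil _
  have hk_lt : (k : ℝ) < δ * n + 1 := Nat.ceil_lt_add_one (by positivity)
  have hkb : (k : ℝ) ≤ 2 * δ * n := by nlinarith
  have hbn : 2 * δ * n ≤ n := by nlinarith
  have hkn : k ≤ n := by exact_mod_cast hkb.trans hbn
  have h2k : 2 * k ≤ n + 1 := by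
    have hr : ((2 * k : ℕ) : ℝ) < ((n + 2 : ℕ) : ℝ) := by push_cast; nlinarith
    have := Nat.cast_lt.mp hr
    omega
  set m : ℕ := n - k with hmdef
  have hmn : m ≤ n := Nat.sub_le _ _
  have hnm : n - m = k := by omega
  have hmR : (m : ℝ) = (n : ℝ) - k := by
    rw [hmdef]; push_cast [hkn]; ring
  refine ⟨twoLevel n m, ?_, ?_⟩
  · -- comparability count
    have hcard := compCount_lower n m hmn
    have hcardR : ((m * (n - m) : ℕ) : ℝ) ≤ (compCount n (twoLevel n m) : ℝ) := by
      exact_mod_cast hcard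
    rw [hnm] at hcardR
    push_cast at hcardR
    have hhalf : ((n : ℝ) - 1) / 2 ≤ (m : ℝ) := by
      rw [hmR]
      have : ((2 * k : ℕ) : ℝ) ≤ ((n + 1 : ℕ) : ℝ) := by exact_mod_cast h2k
      push_cast at this
      linarith
    have hmul : (δ * n) * (((n : ℝ) - 1) / 2) ≤ (k : ℝ) * (m : ℝ) :=
      mul_le_mul hkR hhalf
        (by
          have h1n : (1:ℝ) ≤ n := by exact_mod_cast hn
          linarith) (by positivity)
    calc δ * ((n : ℝ) * ((n : ℝ) - 1) / 2) = (δ * n) * (((n : ℝ) - 1) / 2) := by ring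
      _ ≤ (k : ℝ) * (m : ℝ) := hmul
      _ = (m : ℝ) * (k : ℝ) := mul_comm _ _
      _ ≤ (compCount n (twoLevel n m) : ℝ) := hcardR
  · -- linear extension count
    have hcard := linExtCount_lower n m hmn
    rw [hnm] at hcard
    have hcardR : (m.factorial : ℝ) * (k.factorial : ℝ) ≤
        (linExtCount n (twoLevel n m) : ℝ) := by exact_mod_cast hcard
    set r : ℝ := (2 * δ / Real.exp 1) ^ (2 * δ * (n : ℝ)) with hrdef
    have hbase : (0 : ℝ) < 2 * δ / Real.exp 1 := by positivity
    have hr0 : 0 ≤ r := (Real.rpow_pos_of_pos hbase _).le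
    have hchoose := choose_le_rpow_aux n k δ hδpos hk1 hkn hkb hbn
    have hcr : (n.choose k : ℝ) * r ≤ 1 := by
      have h1 : (n.choose k : ℝ) * r ≤
          (Real.exp 1 / (2 * δ)) ^ (2 * δ * (n : ℝ)) * r :=
        mul_le_mul_of_nonneg_right hchoose hr0
      have h2 : (Real.exp 1 / (2 * δ)) ^ (2 * δ * (n : ℝ)) * r = 1 := by
        rw [hrdef, ← Real.mul_rpow (by positivity) hbase.le]
        have : Real.exp 1 / (2 * δ) * (2 * δ / Real.exp 1) = 1 := by
          field_simp
        rw [this, Real.one_rpow]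
      linarith
    have hfac : (n.factorial : ℝ) =
        (n.choose k : ℝ) * ((k.factorial : ℝ) * ((n - k).factorial : ℝ)) := by
      have := Nat.choose_mul_factorial_mul_factorial hkn
      exact_mod_cast (by rw [← this]; ring_nf : (n.factorial : ℕ) = n.choose k * (k.factorial * (n - k).factorial))
    calc (n.factorial : ℝ) * r
        = ((n.choose k : ℝ) * r) * ((k.factorial : ℝ) * ((n - k).factorial : ℝ)) := by
          rw [hfac]; ring
      _ ≤ 1 * ((k.factorial : ℝ) * ((n - k).factorial : ℝ)) := by
          apply mul_le_mul_of_nonneg_right hcr (by positivity)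
      _ = (m.factorial : ℝ) * (k.factorial : ℝ) := by rw [← hmdef]; ring
      _ ≤ (linExtCount n (twoLevel n m) : ℝ) := hcardR
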